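/- Fix δ ∈ (0,1) and ε ∈ (0,δ). The function B(x) = (e^{-δ}/(1−δ))·e^{x₁ + r(x)}·(1 − r(x)), with r(x) = √(δ² − x₂ + x₁²), satisfies B(x₁, x₁²) = e^{x₁} on the lower parabola, and is a solution of the homogeneous Monge–Ampère equation B_{x₁x₁}B_{x₂x₂} = B_{x₁x₂}² in the interior of Ω_ε. -/

import Mathlib

/-- Partial derivative in the first variable. -/
noncomputable def D1 (f : ℝ × ℝ → ℝ) : ℝ × ℝ → ℝ :=
  fun x => deriv (fun s => f (s, x.2)) x.1

/-- Partial derivative in the second variable. -/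
noncomputable def D2 (f : ℝ × ℝ → ℝ) : ℝ × ℝ → ℝ :=
  fun x => deriv (fun s => f (x.1, s)) x.2

lemma rderiv1 (K b a : ℝ) (h : 0 < K - b + a ^ 2) :
    HasDerivAt (fun s : ℝ => Real.sqrt (K - b + s ^ 2))
      (a / Real.sqrt (K - b + a ^ 2)) a := by
  have h1 : HasDerivAt (fun s : ℝ => K - b + s ^ 2) (2 * a) a := by
    simpa using (hasDerivAt_pow 2 a).const_add (K - b)
  have h2 := (Real.hasDerivAt_sqrt (ne_of_gt h)).comp a h1
  have hr : Real.sqrt (K - b + a ^ 2) ≠ 0 := (Real.sqrt_pos.mpr h).ne'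
  refine (h2).congr_deriv ?_
  symm
  field_simp

lemma rderiv2 (K a b : ℝ) (h : 0 < K - b + a ^ 2) :
    HasDerivAt (fun t : ℝ => Real.sqrt (K - t + a ^ 2))
      (-(1 / (2 * Real.sqrt (K - b + a ^ 2)))) b := by
  have h1 : HasDerivAt (fun t : ℝ => K - t + a ^ 2) (-1) b := by
    simpa using ((hasDerivAt_id b).const_sub K).add_const (a ^ 2)
  have h2 := (Real.hasDerivAt_sqrt (ne_of_gt h)).comp b h1
  refine (h2).congr_deriv ?_
  symm
  ring

lemma exp1 (K b a : ℝ) (h : 0 < K - b + a ^ 2) :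
    HasDerivAt (fun s : ℝ => Real.exp (s + Real.sqrt (K - b + s ^ 2)))
      (Real.exp (a + Real.sqrt (K - b + a ^ 2)) *
        (1 + a / Real.sqrt (K - b + a ^ 2))) a := by
  have := ((hasDerivAt_id a).add (rderiv1 K b a h)).exp
  simpa using this

lemma exp2 (K a b : ℝ) (h : 0 < K - b + a ^ 2) :
    HasDerivAt (fun t : ℝ => Real.exp (a + Real.sqrt (K - t + a ^ 2)))
      (Real.exp (a + Real.sqrt (K - b + a ^ 2)) *
        (-(1 / (2 * Real.sqrt (K - b + a ^ 2))))) b := by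
  have := ((rderiv2 K a b h).const_add a).exp
  simpa using this

/-- first partial in x₁ of B -/
lemma LD1 (C K b a : ℝ) (h : 0 < K - b + a ^ 2) :
    HasDerivAt
      (fun s : ℝ => C * Real.exp (s + Real.sqrt (K - b + s ^ 2)) *
        (1 - Real.sqrt (K - b + s ^ 2)))
      (C * Real.exp (a + Real.sqrt (K - b + a ^ 2)) *
        (1 - Real.sqrt (K - b + a ^ 2) - a)) a := by
  have hr : (0:ℝ) < Real.sqrt (K - b + a ^ 2) := Real.sqrt_pos.mpr h
  have hprod := ((exp1 K b a h).const_mul C).mul ((rderiv1 K b a h).const_sub 1)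
  refine (hprod).congr_deriv ?_
  symm
  field_simp
  ring

/-- first partial in x₂ of B -/
lemma LD2 (C K a b : ℝ) (h : 0 < K - b + a ^ 2) :
    HasDerivAt
      (fun t : ℝ => C * Real.exp (a + Real.sqrt (K - t + a ^ 2)) *
        (1 - Real.sqrt (K - t + a ^ 2)))
      (C * Real.exp (a + Real.sqrt (K - b + a ^ 2)) / 2) b := by
  have hr : (0:ℝ) < Real.sqrt (K - b + a ^ 2) := Real.sqrt_pos.mpr h
  have hprod := ((exp2 K a b h).const_mul C).mul ((rderiv2 K a b h).const_sub 1)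
  refine (hprod).congr_deriv ?_
  symm
  field_simp
  ring

/-- second partial ∂₁∂₁ -/
lemma LD11 (C K b a : ℝ) (h : 0 < K - b + a ^ 2) :
    HasDerivAt
      (fun s : ℝ => C * Real.exp (s + Real.sqrt (K - b + s ^ 2)) *
        (1 - Real.sqrt (K - b + s ^ 2) - s))
      (-(C * Real.exp (a + Real.sqrt (K - b + a ^ 2)) *
        (Real.sqrt (K - b + a ^ 2) + a) ^ 2 / Real.sqrt (K - b + a ^ 2))) a := by
  have hr : (0:ℝ) < Real.sqrt (K - b + a ^ 2) := Real.sqrt_pos.mpr h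
  have hprod := ((exp1 K b a h).const_mul C).mul
    (((rderiv1 K b a h).const_sub 1).sub (hasDerivAt_id a))
  refine (hprod).congr_deriv ?_
  symm
  simp only [Pi.sub_apply, id]
  field_simp
  ring

/-- second partial ∂₁∂₂ -/
lemma LD12 (C K b a : ℝ) (h : 0 < K - b + a ^ 2) :
    HasDerivAt
      (fun s : ℝ => C * Real.exp (s + Real.sqrt (K - b + s ^ 2)) / 2)
      (C * Real.exp (a + Real.sqrt (K - b + a ^ 2)) *
        (1 + a / Real.sqrt (K - b + a ^ 2)) / 2) a := by
  have := ((exp1 K b a h).const_mul C).div_const 2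
  refine (this).congr_deriv ?_
  symm
  ring

/-- second partial ∂₂∂₂ -/
lemma LD22 (C K a b : ℝ) (h : 0 < K - b + a ^ 2) :
    HasDerivAt
      (fun t : ℝ => C * Real.exp (a + Real.sqrt (K - t + a ^ 2)) / 2)
      (-(C * Real.exp (a + Real.sqrt (K - b + a ^ 2)) /
        (4 * Real.sqrt (K - b + a ^ 2)))) b := by
  have hr : (0:ℝ) < Real.sqrt (K - b + a ^ 2) := Real.sqrt_pos.mpr h
  have := ((exp2 K a b h).const_mul C).div_const 2
  refine (this).congr_deriv ?_
  symm
  have hrne : Real.sqrt (K - b + a ^ 2) ≠ 0 := hr.ne'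
  field_simp
  ring

theorem stmt17 (δ ε : ℝ) (hδ : δ ∈ Set.Ioo (0 : ℝ) 1) (hε : ε ∈ Set.Ioo 0 δ)
    (B : ℝ × ℝ → ℝ)
    (hB : B = fun x : ℝ × ℝ =>
      Real.exp (-δ) / (1 - δ) *
        Real.exp (x.1 + Real.sqrt (δ ^ 2 - x.2 + x.1 ^ 2)) *
        (1 - Real.sqrt (δ ^ 2 - x.2 + x.1 ^ 2))) :
    (∀ x₁ : ℝ, B (x₁, x₁ ^ 2) = Real.exp x₁) ∧
    (∀ x : ℝ × ℝ, x.1 ^ 2 < x.2 → x.2 < x.1 ^ 2 + ε ^ 2 →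
      D1 (D1 B) x * D2 (D2 B) x = (D1 (D2 B) x) ^ 2) := by
  obtain ⟨hδ0, hδ1⟩ := hδ
  obtain ⟨hε0, hεδ⟩ := hε
  set C := Real.exp (-δ) / (1 - δ) with hC
  have h1δ : (1:ℝ) - δ ≠ 0 := by linarith
  constructor
  · intro a
    have h2 : δ ^ 2 - a ^ 2 + a ^ 2 = δ ^ 2 := by ring
    simp only [hB, h2, Real.sqrt_sq hδ0.le]
    rw [hC, div_mul_eq_mul_div, div_mul_eq_mul_div, div_eq_iff h1δ,
      ← Real.exp_add]
    ring_nf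
  · intro x hx1 hx2
    obtain ⟨a, b⟩ := x
    simp only at hx1 hx2 ⊢
    have hu : 0 < δ ^ 2 - b + a ^ 2 := by nlinarith
    set r := Real.sqrt (δ ^ 2 - b + a ^ 2) with hrdef
    have hr : 0 < r := Real.sqrt_pos.mpr hu
    -- first partials on neighborhoods
    have hD1B : ∀ p : ℝ × ℝ, 0 < δ ^ 2 - p.2 + p.1 ^ 2 →
        D1 B p = C * Real.exp (p.1 + Real.sqrt (δ ^ 2 - p.2 + p.1 ^ 2)) *
          (1 - Real.sqrt (δ ^ 2 - p.2 + p.1 ^ 2) - p.1) := by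
      intro p hp
      have := (LD1 C (δ ^ 2) p.2 p.1 hp).deriv
      simp only [D1, hB]
      exact this
    have hD2B : ∀ p : ℝ × ℝ, 0 < δ ^ 2 - p.2 + p.1 ^ 2 →
        D2 B p = C * Real.exp (p.1 + Real.sqrt (δ ^ 2 - p.2 + p.1 ^ 2)) / 2 := by
      intro p hp
      have := (LD2 C (δ ^ 2) p.1 p.2 hp).deriv
      simp only [D2, hB]
      exact this
    -- neighborhood positivity in first coordinate
    have hev1 : ∀ᶠ s in nhds a, 0 < δ ^ 2 - b + s ^ 2 := by
      have hc : Continuous (fun s : ℝ => δ ^ 2 - b + s ^ 2) := by continuity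
      exact (isOpen_lt continuous_const hc).eventually_mem hu
    have hev2 : ∀ᶠ t in nhds b, 0 < δ ^ 2 - t + a ^ 2 := by
      have hc : Continuous (fun t : ℝ => δ ^ 2 - t + a ^ 2) := by continuity
      exact (isOpen_lt continuous_const hc).eventually_mem hu
    -- D1 (D1 B)
    have e11 : D1 (D1 B) (a, b) =
        -(C * Real.exp (a + r) * (r + a) ^ 2 / r) := by
      have heq : (fun s => D1 B (s, b)) =ᶠ[nhds a]
          (fun s => C * Real.exp (s + Real.sqrt (δ ^ 2 - b + s ^ 2)) *
            (1 - Real.sqrt (δ ^ 2 - b + s ^ 2) - s)) :=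
        hev1.mono fun s hs => hD1B (s, b) hs
      have : D1 (D1 B) (a, b) = deriv (fun s => C * Real.exp (s + Real.sqrt (δ ^ 2 - b + s ^ 2)) *
            (1 - Real.sqrt (δ ^ 2 - b + s ^ 2) - s)) a := by
        simp only [D1]
        exact heq.deriv_eq
      rw [this, (LD11 C (δ ^ 2) b a hu).deriv]
    -- D2 (D2 B)
    have e22 : D2 (D2 B) (a, b) = -(C * Real.exp (a + r) / (4 * r)) := by
      have heq : (fun t => D2 B (a, t)) =ᶠ[nhds b]
          (fun t => C * Real.exp (a + Real.sqrt (δ ^ 2 - t + a ^ 2)) / 2) :=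
        hev2.mono fun t ht => hD2B (a, t) ht
      have : D2 (D2 B) (a, b) = deriv
          (fun t => C * Real.exp (a + Real.sqrt (δ ^ 2 - t + a ^ 2)) / 2) b := by
        simp only [D2]
        exact heq.deriv_eq
      rw [this, (LD22 C (δ ^ 2) a b hu).deriv]
    -- D1 (D2 B)
    have e12 : D1 (D2 B) (a, b) =
        C * Real.exp (a + r) * (1 + a / r) / 2 := by
      have heq : (fun s => D2 B (s, b)) =ᶠ[nhds a]
          (fun s => C * Real.exp (s + Real.sqrt (δ ^ 2 - b + s ^ 2)) / 2) :=
        hev1.mono fun s hs => hD2B (s, b) hs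
      have : D1 (D2 B) (a, b) = deriv
          (fun s => C * Real.exp (s + Real.sqrt (δ ^ 2 - b + s ^ 2)) / 2) a := by
        simp only [D1]
        exact heq.deriv_eq
      rw [this, (LD12 C (δ ^ 2) b a hu).deriv]
    rw [e11, e22, e12]
    field_simp
    ring
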